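/- Let κ be an algebraically closed field of characteristic ≠ 2, and Λ_r = κ((t₁))...((t_r)). Then the r-fold Pfister form ⟨⟨t₁,...,t_r⟩⟩ is universal over Λ_r but anisotropic (does not represent 0 nontrivially). -/

import Mathlib

/-- Auxiliary construction: the iterated Laurent series field together with its
field structure. -/
noncomputable def IteratedLaurentAux (κ : Type) [Field κ] : ℕ → (T : Type) × Field T
  | 0 => ⟨κ, inferInstance⟩
  | n + 1 =>
      letI := (IteratedLaurentAux κ n).2
      ⟨LaurentSeries (IteratedLaurentAux κ n).1, inferInstance⟩

/-- The iterated formal Laurent series field `Λ_r = κ((t₁))…((t_r))`. -/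
noncomputable def IteratedLaurent (κ : Type) [Field κ] (r : ℕ) : Type :=
  (IteratedLaurentAux κ r).1

noncomputable instance (κ : Type) [Field κ] (r : ℕ) : Field (IteratedLaurent κ r) :=
  (IteratedLaurentAux κ r).2

/-- The variables `t₁, …, t_r` as elements of `Λ_r`: the outermost variable `t_r`
is the Laurent series variable of the last layer, and the earlier ones are the
images of the variables of the inner layers under the coefficient embedding. -/
noncomputable def laurentVar (κ : Type) [Field κ] : ∀ r, Fin r → IteratedLaurent κ r
  | 0 => Fin.elim0
  | r + 1 => fun i =>
      (Fin.lastCases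
        (HahnSeries.single (1 : ℤ) (1 : IteratedLaurent κ r))
        (fun j => HahnSeries.C (laurentVar κ r j)) i :
        LaurentSeries (IteratedLaurent κ r))

/-- The value of the `r`-fold Pfister form `⟨⟨t₁, …, t_r⟩⟩` on a vector `X`. -/
noncomputable def pfisterEval {K : Type} [Field K] {r : ℕ} (t : Fin r → K)
    (X : (Fin r → Bool) → K) : K :=
  ∑ S : Fin r → Bool, (∏ i, if S i then t i else 1) * X S ^ 2

namespace PfisterIterated

variable {F : Type} [Field F]


/-! ### Square roots of power series with constant coefficient 1 -/

noncomputable def sqrtAux (p : ℕ → F) : ℕ → F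
  | 0 => 1
  | n + 1 =>
      (p (n + 1) - ∑ k ∈ (Finset.Ioo 0 (n + 1)).attach,
        sqrtAux p k.1 * sqrtAux p (n + 1 - k.1)) / 2
  termination_by n => n
  decreasing_by
  · have := Finset.mem_Ioo.mp k.2; omega
  · have := Finset.mem_Ioo.mp k.2; omega

lemma sqrtAux_zero (p : ℕ → F) : sqrtAux p 0 = 1 := by rw [sqrtAux]

lemma sqrtAux_succ (p : ℕ → F) (n : ℕ) :
    sqrtAux p (n + 1) =
      (p (n + 1) - ∑ k ∈ Finset.Ioo 0 (n + 1), sqrtAux p k * sqrtAux p (n + 1 - k)) / 2 := by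
  rw [sqrtAux, Finset.sum_attach (Finset.Ioo 0 (n+1)) (fun k => sqrtAux p k * sqrtAux p (n + 1 - k))]

lemma mk_sqrtAux_sq (h2 : (2 : F) ≠ 0) (p : ℕ → F) (hp : p 0 = 1) :
    PowerSeries.mk (sqrtAux p) ^ 2 = PowerSeries.mk p := by
  ext n
  rw [pow_two, PowerSeries.coeff_mul]
  cases n with
  | zero => simp [sqrtAux_zero, hp]
  | succ n =>
      rw [Finset.Nat.sum_antidiagonal_eq_sum_range_succ_mk]
      simp only [PowerSeries.coeff_mk]
      have hins : Finset.range (n + 2) = insert 0 (insert (n + 1) (Finset.Ioo 0 (n + 1))) := by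
        ext x
        simp only [Finset.mem_range, Finset.mem_insert, Finset.mem_Ioo]
        omega
      rw [hins, Finset.sum_insert (by simp), Finset.sum_insert (by simp)]
      rw [Nat.sub_zero, Nat.sub_self, sqrtAux_zero, sqrtAux_succ]
      field_simp
      ring

lemma exists_sq_of_constantCoeff_one (h2 : (2 : F) ≠ 0) {q : PowerSeries F}
    (hq : PowerSeries.constantCoeff q = 1) : ∃ s : PowerSeries F, s ^ 2 = q := by
  have hmk : PowerSeries.mk (fun n => PowerSeries.coeff n q) = q := by
    ext n; rw [PowerSeries.coeff_mk]
  refine ⟨PowerSeries.mk (sqrtAux fun n => PowerSeries.coeff n q), ?_⟩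
  rw [mk_sqrtAux_sq h2 _ (by rw [PowerSeries.coeff_zero_eq_constantCoeff_apply]; exact hq), hmk]



/-! ### Coefficients of products of Hahn series -/

lemma coeff_mul_lt (f g : HahnSeries ℤ F) {m n : ℤ}
    (hf : ∀ i < m, f.coeff i = 0) (hg : ∀ j < n, g.coeff j = 0)
    {k : ℤ} (hk : k < m + n) : (f * g).coeff k = 0 := by
  rw [HahnSeries.coeff_mul]
  apply Finset.sum_eq_zero
  rintro ⟨i, j⟩ hij
  rw [Finset.mem_addAntidiagonal] at hij
  obtain ⟨-, -, hsum⟩ := hij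
  by_cases him : i < m
  · rw [hf i him, zero_mul]
  · rw [hg j (by simp only [Prod.fst, Prod.snd] at hsum; omega), mul_zero]

lemma coeff_mul_eq (f g : HahnSeries ℤ F) {m n : ℤ}
    (hf : ∀ i < m, f.coeff i = 0) (hg : ∀ j < n, g.coeff j = 0) :
    (f * g).coeff (m + n) = f.coeff m * g.coeff n := by
  rw [HahnSeries.coeff_mul]
  apply Finset.sum_eq_single (m, n)
  · rintro ⟨i, j⟩ hij hne
    rw [Finset.mem_addAntidiagonal] at hij
    obtain ⟨h1, h2, hsum⟩ := hij
    rw [HahnSeries.mem_support] at h1 h2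
    simp only [Prod.fst, Prod.snd] at h1 h2 hsum ⊢
    by_cases him : i < m
    · exact absurd (hf i him) h1
    · by_cases hjn : j < n
      · exact absurd (hg j hjn) h2
      · exact absurd (by constructor <;> omega : i = m ∧ j = n)
          (by simpa [Prod.ext_iff] using hne)
  · intro hmem
    by_cases h : f.coeff m = 0
    · rw [h, zero_mul]
    by_cases h' : g.coeff n = 0
    · rw [h', mul_zero]
    exact absurd (Finset.mem_addAntidiagonal.mpr
      ⟨(HahnSeries.mem_support f m).mpr h, (HahnSeries.mem_support g n).mpr h', rfl⟩) hmem

/-! ### Diagonal forms with constant coefficients over Laurent series -/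

lemma diag_key {ι : Type} [Fintype ι] (c : ι → F)
    (hc : ∀ y : ι → F, ∑ i, c i * y i ^ 2 = 0 → y = 0)
    (X : ι → HahnSeries ℤ F) (hX : X ≠ 0) :
    ∃ m : ℤ, (∑ i, HahnSeries.C (c i) * X i ^ 2).coeff (m + m) ≠ 0 ∧
      ∀ k < m + m, (∑ i, HahnSeries.C (c i) * X i ^ 2).coeff k = 0 := by
  classical
  have hne : ∃ i, X i ≠ 0 := by
    by_contra h; push_neg at h; exact hX (funext fun i => h i)
  obtain ⟨i₀, hi₀⟩ := hne
  have htne : ((Finset.univ.filter fun i => X i ≠ 0).image fun i => (X i).order).Nonempty :=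
    ⟨_, Finset.mem_image.mpr ⟨i₀, Finset.mem_filter.mpr ⟨Finset.mem_univ _, hi₀⟩, rfl⟩⟩
  set m := ((Finset.univ.filter fun i => X i ≠ 0).image fun i => (X i).order).min' htne with hm
  have hlow : ∀ i, ∀ k < m, (X i).coeff k = 0 := by
    intro i k hk
    by_cases hXi : X i = 0
    · simp [hXi]
    · have hmo : m ≤ (X i).order := by
        rw [hm]
        exact Finset.min'_le _ _
          (Finset.mem_image.mpr ⟨i, Finset.mem_filter.mpr ⟨Finset.mem_univ _, hXi⟩, rfl⟩)
      exact HahnSeries.coeff_eq_zero_of_lt_order (lt_of_lt_of_le hk hmo)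
  obtain ⟨i₁, hi₁ne, hi₁⟩ : ∃ i, X i ≠ 0 ∧ (X i).order = m := by
    have hmm := Finset.min'_mem _ htne
    obtain ⟨i, his, hio⟩ := Finset.mem_image.mp hmm
    exact ⟨i, (Finset.mem_filter.mp his).2, by rw [hm]; exact hio⟩
  have hC0 : ∀ i : ι, ∀ j < (0 : ℤ), (HahnSeries.C (c i)).coeff j = 0 := by
    intro i j hj
    rw [HahnSeries.C_apply, HahnSeries.coeff_single_of_ne (by omega)]
  have hXXlt : ∀ i, ∀ j < m + m, (X i * X i).coeff j = 0 := fun i j hj =>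
    coeff_mul_lt (X i) (X i) (hlow i) (hlow i) hj
  have hterm_lt : ∀ i, ∀ k < m + m, (HahnSeries.C (c i) * X i ^ 2).coeff k = 0 := by
    intro i k hk
    rw [pow_two]
    exact coeff_mul_lt _ _ (hC0 i) (hXXlt i) (by omega : k < 0 + (m + m))
  have hterm_eq : ∀ i, (HahnSeries.C (c i) * X i ^ 2).coeff (m + m)
      = c i * ((X i).coeff m) ^ 2 := by
    intro i
    have hC : (HahnSeries.C (c i) * (X i * X i)).coeff (0 + (m + m))
        = (HahnSeries.C (c i) : HahnSeries ℤ F).coeff 0 * (X i * X i).coeff (m + m) :=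
      coeff_mul_eq _ _ (hC0 i) (hXXlt i)
    rw [zero_add] at hC
    rw [pow_two, hC, coeff_mul_eq (X i) (X i) (hlow i) (hlow i),
      HahnSeries.C_apply, HahnSeries.coeff_single_same]
    ring
  have hsumc : ∀ k : ℤ, (∑ i, HahnSeries.C (c i) * X i ^ 2).coeff k
      = ∑ i, (HahnSeries.C (c i) * X i ^ 2).coeff k := fun k =>
    map_sum (HahnSeries.coeff.addMonoidHom k) _ _
  refine ⟨m, ?_, ?_⟩
  · rw [hsumc, Finset.sum_congr rfl fun i _ => hterm_eq i]
    intro h0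
    have hy := hc (fun i => (X i).coeff m) h0
    have := congrFun hy i₁
    simp only [Pi.zero_apply] at this
    rw [← hi₁] at this
    exact HahnSeries.coeff_order_eq_zero.not.2 hi₁ne this
  · intro k hk
    rw [hsumc]
    exact Finset.sum_eq_zero fun i _ => hterm_lt i k hk



/-- the variable vector for the Laurent series step -/
noncomputable def tvec {r : ℕ} (t' : Fin r → F) : Fin (r + 1) → HahnSeries ℤ F := fun i =>
  Fin.lastCases (HahnSeries.single (1 : ℤ) (1 : F)) (fun j => HahnSeries.C (t' j)) i

lemma prod_snoc {r : ℕ} (t' : Fin r → F) (S : Fin r → Bool) (b : Bool) :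
    (∏ i, if (Fin.snoc S b : Fin (r + 1) → Bool) i then tvec t' i else 1) =
      (if b then HahnSeries.single (1 : ℤ) (1 : F) else 1) *
        HahnSeries.C (∏ j, if S j then t' j else 1) := by
  rw [Fin.prod_univ_castSucc]
  have h1 : ∀ j : Fin r, (if (Fin.snoc S b : Fin (r + 1) → Bool) (Fin.castSucc j)
      then tvec t' (Fin.castSucc j) else 1) = HahnSeries.C (if S j then t' j else 1) := by
    intro j
    rw [Fin.snoc_castSucc]
    unfold tvec
    rw [Fin.lastCases_castSucc, apply_ite HahnSeries.C, map_one]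
  rw [Finset.prod_congr rfl fun j _ => h1 j, ← map_prod]
  have h2 : (if (Fin.snoc S b : Fin (r + 1) → Bool) (Fin.last r)
      then tvec t' (Fin.last r) else 1)
      = (if b then HahnSeries.single (1 : ℤ) (1 : F) else 1) := by
    rw [Fin.snoc_last]
    unfold tvec
    rw [Fin.lastCases_last]
  rw [h2, mul_comm]

lemma step_sq {r : ℕ} (h2 : (2 : F) ≠ 0) (t' : Fin r → F)
    (ih : ∀ c : F, c ≠ 0 →
      ∃ (S : Fin r → Bool) (b : F), c = (∏ j, if S j then t' j else 1) * b ^ 2)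
    (a : HahnSeries ℤ F) (ha : a ≠ 0) :
    ∃ (S : Fin (r + 1) → Bool) (b : HahnSeries ℤ F),
      a = (∏ i, if S i then tvec t' i else 1) * b ^ 2 := by
  have hc : a.coeff a.order ≠ 0 := HahnSeries.coeff_order_eq_zero.not.2 ha
  have hp0 : PowerSeries.constantCoeff (LaurentSeries.powerSeriesPart a) = a.coeff a.order := by
    rw [← PowerSeries.coeff_zero_eq_constantCoeff_apply,
      LaurentSeries.powerSeriesPart_coeff]
    simp
  have hq1 : PowerSeries.constantCoeff
      (PowerSeries.C (a.coeff a.order)⁻¹ * (LaurentSeries.powerSeriesPart a)) = 1 := by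
    rw [map_mul, PowerSeries.constantCoeff_C, hp0, inv_mul_cancel₀ hc]
  obtain ⟨s, hs⟩ := exists_sq_of_constantCoeff_one h2 hq1
  have hps : (LaurentSeries.powerSeriesPart a) = PowerSeries.C (a.coeff a.order) * s ^ 2 := by
    rw [hs, ← mul_assoc, ← map_mul, mul_inv_cancel₀ hc, map_one, one_mul]
  have ha2 : a = HahnSeries.single a.order 1 *
      (HahnSeries.C (a.coeff a.order) * (HahnSeries.ofPowerSeries ℤ F s) ^ 2) := by
    conv_lhs => rw [← LaurentSeries.single_order_mul_powerSeriesPart a]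
    rw [hps, PowerSeries.coe_mul, PowerSeries.coe_C, PowerSeries.coe_pow]
  obtain ⟨S, d, hd⟩ := ih _ hc
  have hCc : (HahnSeries.C (a.coeff a.order) : HahnSeries ℤ F)
      = HahnSeries.C (∏ j, if S j then t' j else 1) * HahnSeries.C d ^ 2 := by
    rw [hd, map_mul, map_pow]
  rcases Int.emod_two_eq_zero_or_one a.order with hpar | hpar
  · obtain ⟨m, hm⟩ : ∃ m : ℤ, a.order = m + m := ⟨a.order / 2, by omega⟩
    refine ⟨Fin.snoc S false,
      HahnSeries.single m 1 * HahnSeries.ofPowerSeries ℤ F s * HahnSeries.C d, ?_⟩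
    rw [prod_snoc, if_neg (by simp)]
    have hsing : (HahnSeries.single a.order 1 : HahnSeries ℤ F)
        = HahnSeries.single m 1 * HahnSeries.single m 1 := by
      rw [hm, HahnSeries.single_mul_single, mul_one]
    conv_lhs => rw [ha2, hCc, hsing]
    ring
  · obtain ⟨m, hm⟩ : ∃ m : ℤ, a.order = 1 + (m + m) := ⟨a.order / 2, by omega⟩
    refine ⟨Fin.snoc S true,
      HahnSeries.single m 1 * HahnSeries.ofPowerSeries ℤ F s * HahnSeries.C d, ?_⟩
    rw [prod_snoc, if_pos rfl]
    have hsing : (HahnSeries.single a.order 1 : HahnSeries ℤ F)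
        = HahnSeries.single (1 : ℤ) 1 * (HahnSeries.single m 1 * HahnSeries.single m 1) := by
      rw [hm, HahnSeries.single_mul_single, HahnSeries.single_mul_single, mul_one, mul_one]
    conv_lhs => rw [ha2, hCc, hsing]
    ring

lemma step_an {r : ℕ} (t' : Fin r → F)
    (ih : ∀ y : (Fin r → Bool) → F, y ≠ 0 → pfisterEval t' y ≠ 0)
    (X : (Fin (r + 1) → Bool) → HahnSeries ℤ F) (hX : X ≠ 0) :
    pfisterEval (tvec t') X ≠ 0 := by
  classical
  have hc : ∀ y : (Fin r → Bool) → F,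
      ∑ S, (∏ j, if S j then t' j else 1) * y S ^ 2 = 0 → y = 0 := by
    intro y hy
    by_contra h
    exact ih y h hy
  have hdecomp : pfisterEval (tvec t') X =
      (∑ S : Fin r → Bool, HahnSeries.C (∏ j, if S j then t' j else 1)
          * X (Fin.snoc S false) ^ 2) +
        HahnSeries.single (1 : ℤ) (1 : F) *
          ∑ S : Fin r → Bool, HahnSeries.C (∏ j, if S j then t' j else 1)
            * X (Fin.snoc S true) ^ 2 := by
    rw [pfisterEval, ← Equiv.sum_comp (Fin.snocEquiv fun _ => Bool), Fintype.sum_prod_type,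
      Fintype.sum_bool]
    have hT : ∀ S : Fin r → Bool,
        (∏ i, if (Fin.snocEquiv (fun _ => Bool) (true, S)) i then tvec t' i else 1) *
            X (Fin.snocEquiv (fun _ => Bool) (true, S)) ^ 2 =
          HahnSeries.single (1 : ℤ) (1 : F) *
            (HahnSeries.C (∏ j, if S j then t' j else 1) * X (Fin.snoc S true) ^ 2) := by
      intro S
      have he : Fin.snocEquiv (fun _ => Bool) (true, S) = (Fin.snoc S true : Fin (r+1) → Bool) := rfl
      rw [he, prod_snoc, if_pos rfl]
      ring
    have hF : ∀ S : Fin r → Bool,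
        (∏ i, if (Fin.snocEquiv (fun _ => Bool) (false, S)) i then tvec t' i else 1) *
            X (Fin.snocEquiv (fun _ => Bool) (false, S)) ^ 2 =
          HahnSeries.C (∏ j, if S j then t' j else 1) * X (Fin.snoc S false) ^ 2 := by
      intro S
      have he : Fin.snocEquiv (fun _ => Bool) (false, S) = (Fin.snoc S false : Fin (r+1) → Bool) := rfl
      rw [he, prod_snoc, if_neg (by simp), one_mul]
    rw [Finset.sum_congr rfl fun S _ => hT S, Finset.sum_congr rfl fun S _ => hF S,
      ← Finset.mul_sum, add_comm]
  intro hval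
  rw [hdecomp] at hval
  by_cases hYf : (fun S => X (Fin.snoc S false)) = (0 : (Fin r → Bool) → HahnSeries ℤ F)
  · by_cases hYt : (fun S => X (Fin.snoc S true)) = (0 : (Fin r → Bool) → HahnSeries ℤ F)
    · -- X = 0, contradiction
      apply hX
      funext S'
      show X S' = 0
      conv_lhs => rw [← Fin.snoc_init_self S']
      cases hb : S' (Fin.last r)
      · exact congrFun hYf (Fin.init S')
      · exact congrFun hYt (Fin.init S')
    · -- A = 0, T * B ≠ 0
      have hA : (∑ S : Fin r → Bool, HahnSeries.C (∏ j, if S j then t' j else 1)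
          * X (Fin.snoc S false) ^ 2) = 0 := by
        apply Finset.sum_eq_zero
        intro S _
        have : X (Fin.snoc S false) = 0 := congrFun hYf S
        rw [this]
        simp
      rw [hA, zero_add] at hval
      obtain ⟨m, hm, -⟩ := diag_key _ hc _ hYt
      have hB : (∑ S : Fin r → Bool, HahnSeries.C (∏ j, if S j then t' j else 1)
          * X (Fin.snoc S true) ^ 2) ≠ 0 := by
        intro h0; rw [h0] at hm; simp at hm
      have hT : (HahnSeries.single (1 : ℤ) (1 : F) : HahnSeries ℤ F) ≠ 0 := by
        simp [HahnSeries.single_eq_zero_iff]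
      exact mul_ne_zero hT hB hval
  · by_cases hYt : (fun S => X (Fin.snoc S true)) = (0 : (Fin r → Bool) → HahnSeries ℤ F)
    · -- B = 0, A ≠ 0
      have hB : (∑ S : Fin r → Bool, HahnSeries.C (∏ j, if S j then t' j else 1)
          * X (Fin.snoc S true) ^ 2) = 0 := by
        apply Finset.sum_eq_zero
        intro S _
        have : X (Fin.snoc S true) = 0 := congrFun hYt S
        rw [this]
        simp
      rw [hB, mul_zero, add_zero] at hval
      obtain ⟨m, hm, -⟩ := diag_key _ hc _ hYf
      rw [hval] at hm
      simp at hm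
    · -- both nonzero: parity contradiction
      obtain ⟨m, hAm, hAlt⟩ := diag_key _ hc _ hYf
      obtain ⟨m', hBm, hBlt⟩ := diag_key _ hc _ hYt
      have hTc0 : ∀ j < (1 : ℤ), (HahnSeries.single (1 : ℤ) (1 : F)).coeff j = 0 :=
        fun j hj => HahnSeries.coeff_single_of_ne (by omega)
      have hTB_eq : (HahnSeries.single (1 : ℤ) (1 : F) *
          ∑ S : Fin r → Bool, HahnSeries.C (∏ j, if S j then t' j else 1)
            * X (Fin.snoc S true) ^ 2).coeff (1 + (m' + m'))
          = (∑ S : Fin r → Bool, HahnSeries.C (∏ j, if S j then t' j else 1)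
            * X (Fin.snoc S true) ^ 2).coeff (m' + m') := by
        rw [coeff_mul_eq _ _ hTc0 hBlt, HahnSeries.coeff_single_same, one_mul]
      have hTB_lt : ∀ k < 1 + (m' + m'), (HahnSeries.single (1 : ℤ) (1 : F) *
          ∑ S : Fin r → Bool, HahnSeries.C (∏ j, if S j then t' j else 1)
            * X (Fin.snoc S true) ^ 2).coeff k = 0 :=
        fun k hk => coeff_mul_lt _ _ hTc0 hBlt hk
      have hcoeff : ∀ k : ℤ, (∑ S : Fin r → Bool, HahnSeries.C (∏ j, if S j then t' j else 1)
          * X (Fin.snoc S false) ^ 2).coeff k +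
          (HahnSeries.single (1 : ℤ) (1 : F) *
          ∑ S : Fin r → Bool, HahnSeries.C (∏ j, if S j then t' j else 1)
            * X (Fin.snoc S true) ^ 2).coeff k = 0 := by
        intro k
        rw [← HahnSeries.coeff_add, hval]
        simp
      rcases lt_trichotomy (m + m) (1 + (m' + m')) with h | h | h
      · have := hcoeff (m + m)
        rw [hTB_lt _ h, add_zero] at this
        exact hAm this
      · omega
      · have := hcoeff (1 + (m' + m'))
        rw [hAlt _ h, zero_add, hTB_eq] at this
        exact hBm this


end PfisterIterated

/-- Let `κ` be an algebraically closed field of characteristic `≠ 2` and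
`Λ_r = κ((t₁))…((t_r))` the iterated formal Laurent series field.  Then the
`r`-fold Pfister form `⟨⟨t₁, …, t_r⟩⟩` is universal over `Λ_r` (it represents
every nonzero element) but anisotropic (it does not represent `0`
nontrivially). -/
theorem pfister_universal_anisotropic_iteratedLaurent (κ : Type) [Field κ]
    [IsAlgClosed κ] (h2 : ringChar κ ≠ 2) (r : ℕ) :
    (∀ a : IteratedLaurent κ r, a ≠ 0 →
        ∃ X : (Fin r → Bool) → IteratedLaurent κ r,
          pfisterEval (laurentVar κ r) X = a) ∧
    (∀ X : (Fin r → Bool) → IteratedLaurent κ r,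
        pfisterEval (laurentVar κ r) X = 0 → X = 0) := by
  have h2F : ∀ n, (2 : IteratedLaurent κ n) ≠ 0 := by
    intro n
    induction n with
    | zero => exact Ring.two_ne_zero h2
    | succ n ih =>
        intro h0
        apply ih
        have h0' : (2 : HahnSeries ℤ (IteratedLaurent κ n)) = 0 := h0
        rw [show (2 : HahnSeries ℤ (IteratedLaurent κ n))
            = HahnSeries.C (2 : IteratedLaurent κ n) from (map_ofNat HahnSeries.C 2).symm] at h0'
        exact HahnSeries.C_injective (h0'.trans (map_zero (HahnSeries.C)).symm)
  have key : ∀ n, (∀ a : IteratedLaurent κ n, a ≠ 0 →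
        ∃ (S : Fin n → Bool) (b : IteratedLaurent κ n),
          a = (∏ j, if S j then laurentVar κ n j else 1) * b ^ 2) ∧
      (∀ X : (Fin n → Bool) → IteratedLaurent κ n, X ≠ 0 →
        pfisterEval (laurentVar κ n) X ≠ 0) := by
    intro n
    induction n with
    | zero =>
        constructor
        · intro a ha
          obtain ⟨b, hb⟩ := IsAlgClosed.exists_pow_nat_eq (k := κ) a (n := 2) (by norm_num)
          refine ⟨fun _ => false, b, ?_⟩
          have h1 : (∏ j : Fin 0, if (fun _ => false : Fin 0 → Bool) j
              then laurentVar κ 0 j else 1) = 1 := Finset.prod_of_isEmpty _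
          rw [h1, one_mul]
          exact hb.symm
        · intro X hX hval
          apply hX
          unfold pfisterEval at hval
          rw [Fintype.sum_eq_single (fun _ => false : Fin 0 → Bool)
              (fun b hb => absurd (Subsingleton.elim b _) hb),
            Finset.prod_of_isEmpty, one_mul] at hval
          have hXd := (pow_eq_zero_iff (n := 2) (by norm_num)).mp hval
          funext S
          rw [show S = (fun _ => false : Fin 0 → Bool) from Subsingleton.elim _ _]
          exact hXd
    | succ n ih =>
        obtain ⟨ihSq, ihAn⟩ := ih
        constructor
        · intro a ha
          obtain ⟨S, b, hb⟩ :=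
            PfisterIterated.step_sq (F := IteratedLaurent κ n) (h2F n) (laurentVar κ n) ihSq a ha
          exact ⟨S, b, hb⟩
        · intro X hX
          exact PfisterIterated.step_an (F := IteratedLaurent κ n) (laurentVar κ n) ihAn X hX
  constructor
  · intro a ha
    obtain ⟨S, b, hab⟩ := (key r).1 a ha
    refine ⟨fun S' => if S' = S then b else 0, ?_⟩
    unfold pfisterEval
    rw [Finset.sum_eq_single S]
    · simpa using hab.symm
    · intro S' _ hne
      simp [hne]
    · intro h
      exact absurd (Finset.mem_univ S) h
  · intro X hval
    by_contra hX
    exact (key r).2 X hX hval
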